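/- Assume all eight w_{ijk} are nonzero. Define, for (y₀,y₁) ∈ ℂ², the 2×2 matrix T(y₀,y₁) with first row (w_{000}y₀ + w_{010}y₁, w_{100}y₀ + w_{110}y₁) and second row (w_{001}y₀ + w_{011}y₁, w_{101}y₀ + w_{111}y₁). Then there exist complex numbers a₀, a₁ and a 2×2 complex matrix M such that T(y₀,y₁) = (a₀y₀ + a₁y₁)·M for all (y₀,y₁) ∈ ℂ², if and only if F_{··0} = F_{··1} = F_{0··} = F_{1··} = 0. -/

import Mathlib

theorem stmt_8 (w000 w001 w010 w011 w100 w101 w110 w111 : ℂ)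
    (h000 : w000 ≠ 0) (h001 : w001 ≠ 0) (h010 : w010 ≠ 0) (h011 : w011 ≠ 0)
    (h100 : w100 ≠ 0) (h101 : w101 ≠ 0) (h110 : w110 ≠ 0) (h111 : w111 ≠ 0)
    (T : ℂ → ℂ → Matrix (Fin 2) (Fin 2) ℂ)
    (hT : ∀ y0 y1 : ℂ, T y0 y1 =
      !![w000 * y0 + w010 * y1, w100 * y0 + w110 * y1;
         w001 * y0 + w011 * y1, w101 * y0 + w111 * y1]) :
    (∃ (a0 a1 : ℂ) (M : Matrix (Fin 2) (Fin 2) ℂ),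
        ∀ y0 y1 : ℂ, T y0 y1 = (a0 * y0 + a1 * y1) • M)
    ↔ (w000 * w110 - w010 * w100 = 0 ∧ w001 * w111 - w011 * w101 = 0 ∧
       w000 * w011 - w010 * w001 = 0 ∧ w100 * w111 - w110 * w101 = 0) := by
  constructor
  · rintro ⟨a0, a1, M, h⟩
    have hA := h 1 0
    have hB := h 0 1
    rw [hT] at hA hB
    have e000 : w000 = a0 * M 0 0 := by
      have := congrFun (congrFun hA 0) 0; simpa using this
    have e100 : w100 = a0 * M 0 1 := by
      have := congrFun (congrFun hA 0) 1; simpa using this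
    have e001 : w001 = a0 * M 1 0 := by
      have := congrFun (congrFun hA 1) 0; simpa using this
    have e101 : w101 = a0 * M 1 1 := by
      have := congrFun (congrFun hA 1) 1; simpa using this
    have e010 : w010 = a1 * M 0 0 := by
      have := congrFun (congrFun hB 0) 0; simpa using this
    have e110 : w110 = a1 * M 0 1 := by
      have := congrFun (congrFun hB 0) 1; simpa using this
    have e011 : w011 = a1 * M 1 0 := by
      have := congrFun (congrFun hB 1) 0; simpa using this
    have e111 : w111 = a1 * M 1 1 := by
      have := congrFun (congrFun hB 1) 1; simpa using this
    refine ⟨?_, ?_, ?_, ?_⟩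
    · linear_combination w110 * e000 + a0 * M 0 0 * e110 - w100 * e010 - a1 * M 0 0 * e100
    · linear_combination w111 * e001 + a0 * M 1 0 * e111 - w101 * e011 - a1 * M 1 0 * e101
    · linear_combination w011 * e000 + a0 * M 0 0 * e011 - w001 * e010 - a1 * M 0 0 * e001
    · linear_combination w111 * e100 + a0 * M 0 1 * e111 - w101 * e110 - a1 * M 0 1 * e101
  · rintro ⟨h1, h2, h3, h4⟩
    have h5 : w000 * w111 = w010 * w101 :=
      mul_left_cancel₀ h001 (by linear_combination w000 * h2 + w101 * h3)
    refine ⟨1, w010 / w000, !![w000, w100; w001, w101], fun y0 y1 => ?_⟩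
    rw [hT]
    ext i j
    fin_cases i <;> fin_cases j <;>
      simp [Matrix.smul_apply, smul_eq_mul] <;> field_simp
    · linear_combination y1 * h1
    · linear_combination y1 * h3
    · linear_combination y1 * h5
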